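/- Let B be an even unimodular ℤ-lattice, let (V, φ) be a real quadratic space, and let L be a full-rank lattice in (V, φ) isometric to B ⊕ II_{1,1}(2). Then there is exactly one odd unimodular full-rank lattice in (V, φ) containing L. -/

import Mathlib

open Matrix

/-- Gram matrix of the odd unimodular lattice `I_{p,m}`:
diagonal with `p` entries `+1` and `m` entries `-1`. -/
def gramI (p m : ℕ) : Matrix (Fin (p + m)) (Fin (p + m)) ℤ :=
  Matrix.diagonal fun i => if (i : ℕ) < p then 1 else -1

/-- Gram matrix of the even unimodular lattice `II_{1,1}`. -/
def gramII : Matrix (Fin 2) (Fin 2) ℤ := !![0, 1; 1, 0]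

/-- Gram matrix of the direct sum of two lattices. -/
def gramSum {n m : ℕ} (G : Matrix (Fin n) (Fin n) ℤ) (H : Matrix (Fin m) (Fin m) ℤ) :
    Matrix (Fin (n + m)) (Fin (n + m)) ℤ :=
  Matrix.reindex finSumFinEquiv finSumFinEquiv (Matrix.fromBlocks G 0 0 H)

/-- A lattice (given by its Gram matrix) is even when every vector has even norm. -/
def EvenGram {n : ℕ} (G : Matrix (Fin n) (Fin n) ℤ) : Prop :=
  ∀ v : Fin n → ℤ, Even (v ⬝ᵥ G.mulVec v)

/-- A lattice (given by its Gram matrix) has signature `(p, m)` when its real extension is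
equivalent to the diagonal form with `p` entries `+1` and `m` entries `-1`. -/
def HasSignature {n : ℕ} (G : Matrix (Fin n) (Fin n) ℤ) (p m : ℕ) : Prop :=
  n = p + m ∧ ∃ P : Matrix (Fin n) (Fin n) ℝ, IsUnit P.det ∧
    Pᵀ * (G.map (Int.cast : ℤ → ℝ)) * P =
      Matrix.diagonal fun i : Fin n => if (i : ℕ) < p then 1 else -1
/-- The automorphism group of the lattice with Gram matrix `G`: invertible integer matrices
preserving the bilinear form. -/
def gramAut {n : ℕ} (G : Matrix (Fin n) (Fin n) ℤ) : Subgroup (Matrix (Fin n) (Fin n) ℤ)ˣ where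
  carrier := {P | (P : Matrix (Fin n) (Fin n) ℤ)ᵀ * G * (P : Matrix (Fin n) (Fin n) ℤ) = G}
  one_mem' := by simp
  mul_mem' := by
    intro P Q hP hQ
    have hP' : (P : Matrix (Fin n) (Fin n) ℤ)ᵀ * G * (P : Matrix (Fin n) (Fin n) ℤ) = G := hP
    have hQ' : (Q : Matrix (Fin n) (Fin n) ℤ)ᵀ * G * (Q : Matrix (Fin n) (Fin n) ℤ) = G := hQ
    show ((P * Q : (Matrix (Fin n) (Fin n) ℤ)ˣ) : Matrix (Fin n) (Fin n) ℤ)ᵀ * G *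
        ((P * Q : (Matrix (Fin n) (Fin n) ℤ)ˣ) : Matrix (Fin n) (Fin n) ℤ) = G
    have hc : ((P * Q : (Matrix (Fin n) (Fin n) ℤ)ˣ) : Matrix (Fin n) (Fin n) ℤ) =
        (P : Matrix (Fin n) (Fin n) ℤ) * (Q : Matrix (Fin n) (Fin n) ℤ) := rfl
    rw [hc, Matrix.transpose_mul]
    calc (Q : Matrix (Fin n) (Fin n) ℤ)ᵀ * (P : Matrix (Fin n) (Fin n) ℤ)ᵀ * G *
          ((P : Matrix (Fin n) (Fin n) ℤ) * (Q : Matrix (Fin n) (Fin n) ℤ))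
        = (Q : Matrix (Fin n) (Fin n) ℤ)ᵀ *
            ((P : Matrix (Fin n) (Fin n) ℤ)ᵀ * G * (P : Matrix (Fin n) (Fin n) ℤ)) *
            (Q : Matrix (Fin n) (Fin n) ℤ) := by simp only [Matrix.mul_assoc]
      _ = G := by rw [hP', hQ']
  inv_mem' := by
    intro P hP
    have hP' : (P : Matrix (Fin n) (Fin n) ℤ)ᵀ * G * (P : Matrix (Fin n) (Fin n) ℤ) = G := hP
    show ((P⁻¹ : (Matrix (Fin n) (Fin n) ℤ)ˣ) : Matrix (Fin n) (Fin n) ℤ)ᵀ * G *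
        ((P⁻¹ : (Matrix (Fin n) (Fin n) ℤ)ˣ) : Matrix (Fin n) (Fin n) ℤ) = G
    calc ((P⁻¹ : (Matrix (Fin n) (Fin n) ℤ)ˣ) : Matrix (Fin n) (Fin n) ℤ)ᵀ * G *
          ((P⁻¹ : (Matrix (Fin n) (Fin n) ℤ)ˣ) : Matrix (Fin n) (Fin n) ℤ)
        = ((P⁻¹ : (Matrix (Fin n) (Fin n) ℤ)ˣ) : Matrix (Fin n) (Fin n) ℤ)ᵀ *
            ((P : Matrix (Fin n) (Fin n) ℤ)ᵀ * G * (P : Matrix (Fin n) (Fin n) ℤ)) *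
            ((P⁻¹ : (Matrix (Fin n) (Fin n) ℤ)ˣ) : Matrix (Fin n) (Fin n) ℤ) := by rw [hP']
      _ = ((P : Matrix (Fin n) (Fin n) ℤ) *
            ((P⁻¹ : (Matrix (Fin n) (Fin n) ℤ)ˣ) : Matrix (Fin n) (Fin n) ℤ))ᵀ * G *
            ((P : Matrix (Fin n) (Fin n) ℤ) *
            ((P⁻¹ : (Matrix (Fin n) (Fin n) ℤ)ˣ) : Matrix (Fin n) (Fin n) ℤ)) := by
          simp only [Matrix.transpose_mul, Matrix.mul_assoc]
      _ = G := by rw [Units.mul_inv]; simp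
/-- The real symmetric bilinear form on `Fin N → ℝ` with matrix `G`. -/
def gramBilinR {N : ℕ} (G : Matrix (Fin N) (Fin N) ℤ) :
    (Fin N → ℝ) →ₗ[ℝ] (Fin N → ℝ) →ₗ[ℝ] ℝ :=
  LinearMap.mk₂ ℝ (fun x y => x ⬝ᵥ (G.map (Int.cast : ℤ → ℝ)).mulVec y)
    (fun x x' y => by simp only [add_dotProduct])
    (fun c x y => by simp only [smul_dotProduct])
    (fun x y y' => by simp only [Matrix.mulVec_add, dotProduct_add])
    (fun c x y => by simp only [Matrix.mulVec_smul, dotProduct_smul])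

/-- `L` is a full-rank lattice in the real quadratic space `(V, φ)` whose Gram matrix in some
basis is the integer matrix `G`; i.e. `L` is (as a lattice with the restricted form)
a copy of the lattice with Gram matrix `G`. -/
def SpansWithGram {V : Type*} [AddCommGroup V] [Module ℝ V]
    (φ : V →ₗ[ℝ] V →ₗ[ℝ] ℝ) {n : ℕ} (L : Submodule ℤ V) (G : Matrix (Fin n) (Fin n) ℤ) : Prop :=
  ∃ b : Module.Basis (Fin n) ℝ V, L = Submodule.span ℤ (Set.range ⇑b) ∧
    ∀ i j, φ (b i) (b j) = ((G i j : ℤ) : ℝ)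

/-- The dual of a subset `S` of a real quadratic space: vectors pairing integrally with `S`. -/
def dualSet {V : Type*} [AddCommGroup V] [Module ℝ V]
    (φ : V →ₗ[ℝ] V →ₗ[ℝ] ℝ) (S : Set V) : Set V :=
  {x | ∀ y ∈ S, ∃ k : ℤ, φ x y = (k : ℝ)}

/-- `M` is an odd unimodular full-rank lattice in the real quadratic space `(V, φ)`. -/
def IsOddUnimodularLat {V : Type*} [AddCommGroup V] [Module ℝ V]
    (φ : V →ₗ[ℝ] V →ₗ[ℝ] ℝ) (M : Submodule ℤ V) : Prop :=
  (∃ (m : ℕ) (H : Matrix (Fin m) (Fin m) ℤ), SpansWithGram φ M H ∧ IsUnit H.det) ∧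
    ¬ ∀ x ∈ M, ∃ k : ℤ, φ x x = 2 * (k : ℝ)

/-- The standard integer lattice inside `Fin N → ℝ`. -/
def stdLat (N : ℕ) : Submodule ℤ (Fin N → ℝ) :=
  Submodule.span ℤ (Set.range fun i : Fin N => (Pi.single i (1 : ℝ) : Fin N → ℝ))

/-- Coordinatewise inclusion `ℤ^N → ℚ^N`. -/
def intToRat (N : ℕ) : (Fin N → ℤ) →ₗ[ℤ] (Fin N → ℚ) where
  toFun x := fun i => (x i : ℚ)
  map_add' x y := by funext i; push_cast; simp
  map_smul' c x := by
    funext i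
    simp only [Pi.smul_apply, smul_eq_mul, RingHom.id_apply, zsmul_eq_mul]
    push_cast
    ring

/-- The dual lattice of `ℤ^N` (with the form given by the Gram matrix `G`)
inside `ℚ^N`. -/
def ratDual {N : ℕ} (G : Matrix (Fin N) (Fin N) ℤ) : Submodule ℤ (Fin N → ℚ) where
  carrier := {x | ∀ y : Fin N → ℤ, ∃ k : ℤ,
    x ⬝ᵥ (G.map (Int.cast : ℤ → ℚ)).mulVec (intToRat N y) = (k : ℚ)}
  zero_mem' := by intro y; exact ⟨0, by simp⟩
  add_mem' := by
    intro a b ha hb y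
    obtain ⟨k, hk⟩ := ha y
    obtain ⟨l, hl⟩ := hb y
    exact ⟨k + l, by rw [add_dotProduct, hk, hl]; push_cast; ring⟩
  smul_mem' := by
    intro c x hx y
    obtain ⟨k, hk⟩ := hx y
    refine ⟨c * k, ?_⟩
    show (c • x) ⬝ᵥ _ = _
    rw [smul_dotProduct, hk, zsmul_eq_mul]
    push_cast
    ring

/-- The set of vectors of `ℚ^N` pairing integrally with the sublattice `A` of `ℤ^N`,
with respect to the form with Gram matrix `G`. -/
def pairDual {N : ℕ} (G : Matrix (Fin N) (Fin N) ℤ) (A : Submodule ℤ (Fin N → ℤ)) :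
    Submodule ℤ (Fin N → ℚ) where
  carrier := {x | ∀ y ∈ A, ∃ k : ℤ,
    x ⬝ᵥ (G.map (Int.cast : ℤ → ℚ)).mulVec (intToRat N y) = (k : ℚ)}
  zero_mem' := by intro y _; exact ⟨0, by simp⟩
  add_mem' := by
    intro a b ha hb y hy
    obtain ⟨k, hk⟩ := ha y hy
    obtain ⟨l, hl⟩ := hb y hy
    exact ⟨k + l, by rw [add_dotProduct, hk, hl]; push_cast; ring⟩
  smul_mem' := by
    intro c x hx y hy
    obtain ⟨k, hk⟩ := hx y hy
    refine ⟨c * k, ?_⟩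
    show (c • x) ⬝ᵥ _ = _
    rw [smul_dotProduct, hk, zsmul_eq_mul]
    push_cast
    ring

/-- The dual lattice `A*` of a sublattice `A` of `ℤ^N`, taken inside `A ⊗ ℚ`
(realized as the ℚ-span of `A` in `ℚ^N`), with respect to the form with Gram matrix `G`. -/
def relDual {N : ℕ} (G : Matrix (Fin N) (Fin N) ℤ) (A : Submodule ℤ (Fin N → ℤ)) :
    Submodule ℤ (Fin N → ℚ) :=
  (Submodule.span ℚ (intToRat N '' (A : Set (Fin N → ℤ)))).restrictScalars ℤ ⊓ pairDual G A

/-- The orthogonal complement in `ℤ^N` (with Gram matrix `G`) of a sublattice `A`. -/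
def perpSub {N : ℕ} (G : Matrix (Fin N) (Fin N) ℤ) (A : Submodule ℤ (Fin N → ℤ)) :
    Submodule ℤ (Fin N → ℤ) where
  carrier := {x | ∀ a ∈ A, x ⬝ᵥ G.mulVec a = 0}
  zero_mem' := by intro a _; simp
  add_mem' := by
    intro x y hx hy a ha
    rw [add_dotProduct, hx a ha, hy a ha, add_zero]
  smul_mem' := by
    intro c x hx a ha
    show (c • x) ⬝ᵥ _ = 0
    rw [smul_dotProduct, hx a ha, smul_zero]

/-- A vector of a lattice is primitive if it is not a non-unit integer multiple. -/
def IsPrimVec {N : ℕ} (v : Fin N → ℤ) : Prop :=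
  ∀ (k : ℤ) (w : Fin N → ℤ), v = k • w → IsUnit k

/-- A sublattice `A` of `ℤ^N` is primitive if the quotient is torsion-free. -/
def IsPrimSub {N : ℕ} (A : Submodule ℤ (Fin N → ℤ)) : Prop :=
  ∀ (x : Fin N → ℤ) (k : ℤ), k ≠ 0 → k • x ∈ A → x ∈ A

/-- The quotient `A^⊥ / A` of `ℤ^N` (with Gram matrix `G`), with its induced bilinear form,
is isometric to the lattice with Gram matrix `H`: there is a surjection `π` from `A^⊥` with
kernel `A ∩ A^⊥` identifying the induced form with `H`. -/
def QuotIsometric {N m : ℕ} (G : Matrix (Fin N) (Fin N) ℤ) (A : Submodule ℤ (Fin N → ℤ))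
    (H : Matrix (Fin m) (Fin m) ℤ) : Prop :=
  ∃ π : (perpSub G A) →ₗ[ℤ] (Fin m → ℤ), Function.Surjective π ∧
    (∀ x : perpSub G A, π x = 0 ↔ (x : Fin N → ℤ) ∈ A) ∧
    (∀ x y : perpSub G A,
      (x : Fin N → ℤ) ⬝ᵥ G.mulVec (y : Fin N → ℤ) = π x ⬝ᵥ H.mulVec (π y))

section PeriodAux

variable {V : Type*} [AddCommGroup V] [Module ℝ V]

lemma period_pair_expand (φ : V →ₗ[ℝ] V →ₗ[ℝ] ℝ) {ι κ : Type*} [Fintype ι] [Fintype κ]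
    (p : ι → V) (r : κ → V) (v : ι → ℝ) (u : κ → ℝ) :
    φ (∑ i, v i • p i) (∑ j, u j • r j) = ∑ i, ∑ j, v i * u j * φ (p i) (r j) := by
  simp only [_root_.map_sum, _root_.map_smul, LinearMap.coe_sum, Finset.sum_apply,
    LinearMap.smul_apply, smul_eq_mul, Finset.mul_sum]
  rw [Finset.sum_comm]
  exact Finset.sum_congr rfl fun i _ => Finset.sum_congr rfl fun j _ => by ring

lemma period_pair_gram (φ : V →ₗ[ℝ] V →ₗ[ℝ] ℝ) {ι : Type*} [Fintype ι]
    (p : ι → V) (K : Matrix ι ι ℤ)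
    (hp : ∀ i j, φ (p i) (p j) = ((K i j : ℤ) : ℝ)) (v u : ι → ℤ) :
    φ (∑ i, ((v i : ℤ) : ℝ) • p i) (∑ j, ((u j : ℤ) : ℝ) • p j)
      = ((v ⬝ᵥ K.mulVec u : ℤ) : ℝ) := by
  rw [period_pair_expand]
  simp only [hp, dotProduct, Matrix.mulVec, Int.cast_sum, Int.cast_mul, Finset.mul_sum]
  exact Finset.sum_congr rfl fun i _ => Finset.sum_congr rfl fun j _ => by ring

lemma period_mem_span_real {ι : Type*} [Fintype ι] (p : ι → V) (x : V) :
    x ∈ Submodule.span ℤ (Set.range p) ↔ ∃ v : ι → ℤ, ∑ i, ((v i : ℤ) : ℝ) • p i = x := by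
  rw [Submodule.mem_span_range_iff_exists_fun]
  refine exists_congr fun v => ?_
  simp [Int.cast_smul_eq_zsmul]

end PeriodAux

/-- Let `B` be an even unimodular lattice (symmetric Gram matrix `GB`),
let `(V, φ)` be a real quadratic space, and let `L` be a full-rank lattice in `(V, φ)`
isometric to `B ⊕ II_{1,1}(2)`.  Then there is exactly one odd unimodular full-rank
lattice in `(V, φ)` containing `L`. -/
theorem period_lattice_stmt3 {V : Type*} [AddCommGroup V] [Module ℝ V]
    (φ : V →ₗ[ℝ] V →ₗ[ℝ] ℝ) (hφ : ∀ x y, φ x y = φ y x)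
    {n : ℕ} (GB : Matrix (Fin n) (Fin n) ℤ)
    (hsymm : GB.IsSymm) (heven : EvenGram GB) (hunim : IsUnit GB.det)
    (L : Submodule ℤ V) (hL : SpansWithGram φ L (gramSum GB ((2 : ℤ) • gramII))) :
    ∃! M : Submodule ℤ V, IsOddUnimodularLat φ M ∧ L ≤ M := by
  classical
  obtain ⟨b0, hLspan0, hb0gram⟩ := hL
  set GG : Matrix (Fin n ⊕ Fin 2) (Fin n ⊕ Fin 2) ℤ :=
    Matrix.fromBlocks GB 0 0 ((2 : ℤ) • gramII) with hGGdef
  set bb : Module.Basis (Fin n ⊕ Fin 2) ℝ V := b0.reindex finSumFinEquiv.symm with hbbdef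
  have hbb_apply : ∀ s, bb s = b0 (finSumFinEquiv s) := by
    intro s; simp [hbbdef]
  have hp : ∀ s t, φ (bb s) (bb t) = ((GG s t : ℤ) : ℝ) := by
    intro s t
    rw [hbb_apply, hbb_apply, hb0gram]
    simp [gramSum, hGGdef]
  have hLspan : L = Submodule.span ℤ (Set.range ⇑bb) := by
    rw [hLspan0, hbbdef, Module.Basis.range_reindex]
  have hbbL : ∀ s, bb s ∈ L := fun s => hLspan ▸ Submodule.subset_span ⟨s, rfl⟩
  have hsm1 : ∀ (c : ℝ) (x y : V), φ (c • x) y = c * φ x y := by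
    intro c x y; rw [_root_.map_smul]; rfl
  have hsm2 : ∀ (c : ℝ) (x y : V), φ x (c • y) = c * φ x y := by
    intro c x y; rw [_root_.map_smul]; rfl
  have hpll : ∀ i j, φ (bb (Sum.inl i)) (bb (Sum.inl j)) = ((GB i j : ℤ) : ℝ) := by
    intro i j; rw [hp]; simp [hGGdef]
  have hplr : ∀ i (a : Fin 2), φ (bb (Sum.inl i)) (bb (Sum.inr a)) = 0 := by
    intro i a; rw [hp]; simp [hGGdef]
  have hprl : ∀ (a : Fin 2) j, φ (bb (Sum.inr a)) (bb (Sum.inl j)) = 0 := by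
    intro a j; rw [hp]; simp [hGGdef]
  have hprr : ∀ (a b : Fin 2), φ (bb (Sum.inr a)) (bb (Sum.inr b)) = 2 * ((gramII a b : ℤ) : ℝ) := by
    intro a b; rw [hp]
    have hentry : GG (Sum.inr a) (Sum.inr b) = 2 * gramII a b := by
      rw [hGGdef, Matrix.fromBlocks_apply₂₂, Matrix.smul_apply, smul_eq_mul]
    rw [hentry]; push_cast; ring
  set eV : V := bb (Sum.inr 0) with heVdef
  set fV : V := bb (Sum.inr 1) with hfVdef
  have hee : φ eV eV = 0 := by rw [heVdef, hprr]; norm_num [gramII]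
  have hef : φ eV fV = 2 := by rw [heVdef, hfVdef, hprr]; norm_num [gramII]
  have hfe : φ fV eV = 2 := by rw [heVdef, hfVdef, hprr]; norm_num [gramII]
  have hff : φ fV fV = 0 := by rw [hfVdef, hprr]; norm_num [gramII]
  have hle : ∀ i, φ (bb (Sum.inl i)) eV = 0 := fun i => by rw [heVdef]; exact hplr i 0
  have hlf : ∀ i, φ (bb (Sum.inl i)) fV = 0 := fun i => by rw [hfVdef]; exact hplr i 1
  have hel : ∀ j, φ eV (bb (Sum.inl j)) = 0 := fun j => by rw [heVdef]; exact hprl 0 j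
  have hfl : ∀ j, φ fV (bb (Sum.inl j)) = 0 := fun j => by rw [hfVdef]; exact hprl 1 j
  set heH : V := (2:ℝ)⁻¹ • eV with heHdef
  set hfH : V := (2:ℝ)⁻¹ • fV with hfHdef
  set w : V := heH + hfH with hwdef
  have hlw : ∀ i, φ (bb (Sum.inl i)) w = 0 := by
    intro i
    simp [hwdef, heHdef, hfHdef, map_add, hsm2, hle, hlf]
  have hwl : ∀ j, φ w (bb (Sum.inl j)) = 0 := by
    intro j
    simp [hwdef, heHdef, hfHdef, map_add, LinearMap.add_apply, hsm1, hel, hfl]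
  have hww : φ w w = 1 := by
    simp only [hwdef, heHdef, hfHdef, map_add, LinearMap.add_apply, hsm1, hsm2,
      hee, hef, hfe, hff]
    norm_num
  have hwe : φ w eV = 1 := by
    simp only [hwdef, heHdef, hfHdef, map_add, LinearMap.add_apply, hsm1, hee, hfe]
    norm_num
  have hew : φ eV w = 1 := by
    simp only [hwdef, heHdef, hfHdef, map_add, hsm2, hee, hef]
    norm_num
  set M : Submodule ℤ V := L ⊔ Submodule.span ℤ {w} with hMdef
  -- membership of integer combinations in L
  have hcombL : ∀ (vl : Fin n → ℤ) (a c : ℤ),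
      (∑ i, ((vl i : ℤ) : ℝ) • bb (Sum.inl i)) + (a : ℝ) • eV + (c : ℝ) • fV ∈ L := by
    intro vl a c
    refine Submodule.add_mem _ (Submodule.add_mem _ (Submodule.sum_mem _ fun i _ => ?_) ?_) ?_
    · rw [Int.cast_smul_eq_zsmul]; exact Submodule.smul_mem _ _ (hbbL _)
    · rw [heVdef, Int.cast_smul_eq_zsmul]; exact Submodule.smul_mem _ _ (hbbL _)
    · rw [hfVdef, Int.cast_smul_eq_zsmul]; exact Submodule.smul_mem _ _ (hbbL _)
  -- pairing of decomposed vectors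
  have hAe : ∀ (vl : Fin n → ℤ), φ (∑ i, ((vl i : ℤ) : ℝ) • bb (Sum.inl i)) eV = 0 := by
    intro vl
    simp only [_root_.map_sum, LinearMap.coe_sum, Finset.sum_apply, hsm1, hle,
      mul_zero, Finset.sum_const_zero]
  have hAf : ∀ (vl : Fin n → ℤ), φ (∑ i, ((vl i : ℤ) : ℝ) • bb (Sum.inl i)) fV = 0 := by
    intro vl
    simp only [_root_.map_sum, LinearMap.coe_sum, Finset.sum_apply, hsm1, hlf,
      mul_zero, Finset.sum_const_zero]
  have heA : ∀ (vl : Fin n → ℤ), φ eV (∑ i, ((vl i : ℤ) : ℝ) • bb (Sum.inl i)) = 0 := by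
    intro vl
    simp only [_root_.map_sum, hsm2, hel, mul_zero, Finset.sum_const_zero]
  have hfA : ∀ (vl : Fin n → ℤ), φ fV (∑ i, ((vl i : ℤ) : ℝ) • bb (Sum.inl i)) = 0 := by
    intro vl
    simp only [_root_.map_sum, hsm2, hfl, mul_zero, Finset.sum_const_zero]
  have hpairdec : ∀ (vl vl' : Fin n → ℤ) (a c a' c' : ℤ),
      φ ((∑ i, ((vl i : ℤ) : ℝ) • bb (Sum.inl i)) + (a : ℝ) • heH + (c : ℝ) • hfH)
        ((∑ i, ((vl' i : ℤ) : ℝ) • bb (Sum.inl i)) + (a' : ℝ) • heH + (c' : ℝ) • hfH)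
      = ((vl ⬝ᵥ GB.mulVec vl' : ℤ) : ℝ) + ((a * c' + c * a' : ℤ) : ℝ) / 2 := by
    intro vl vl' a c a' c'
    have e1 := period_pair_gram φ (fun i => bb (Sum.inl i)) GB hpll vl vl'
    simp only [heHdef, hfHdef, map_add, LinearMap.add_apply, hsm1, hsm2,
      e1, hAe, hAf, heA, hfA, hee, hef, hfe, hff]
    push_cast
    ring
  -- the new basis for M
  have hFD : FiniteDimensional ℝ V := Module.Basis.finiteDimensional_of_finite bb
  set cfun : (Fin n ⊕ Fin 2) → V := Sum.elim (fun i => bb (Sum.inl i)) ![w, eV] with hcfundef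
  have hcfun0 : cfun (Sum.inr 0) = w := rfl
  have hcfun1 : cfun (Sum.inr 1) = eV := rfl
  have hfVw : fV = (2:ℝ) • w - eV := by
    rw [hwdef, heHdef, hfHdef]; module
  have hspan_top : ⊤ ≤ Submodule.span ℝ (Set.range cfun) := by
    rw [← bb.span_eq, Submodule.span_le]
    rintro _ ⟨s, rfl⟩
    rcases s with i | a
    · exact Submodule.subset_span ⟨Sum.inl i, rfl⟩
    · fin_cases a
      · exact Submodule.subset_span ⟨Sum.inr 1, rfl⟩
      · show fV ∈ _
        rw [hfVw, ← hcfun0, ← hcfun1]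
        exact Submodule.sub_mem _
          (Submodule.smul_mem _ _ (Submodule.subset_span ⟨Sum.inr 0, rfl⟩))
          (Submodule.subset_span ⟨Sum.inr 1, rfl⟩)
  set cb : Module.Basis (Fin n ⊕ Fin 2) ℝ V :=
    basisOfTopLeSpanOfCardEqFinrank cfun hspan_top
      (Module.finrank_eq_card_basis bb).symm with hcbdef
  have hcb : ⇑cb = cfun := coe_basisOfTopLeSpanOfCardEqFinrank _ _ _
  have hMspan : M = Submodule.span ℤ (Set.range ⇑(cb.reindex finSumFinEquiv)) := by
    rw [Module.Basis.range_reindex, hcb]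
    apply le_antisymm
    · rw [hMdef]
      refine sup_le ?_ ?_
      · rw [hLspan, Submodule.span_le]
        rintro _ ⟨s, rfl⟩
        rcases s with i | a
        · exact Submodule.subset_span ⟨Sum.inl i, rfl⟩
        · fin_cases a
          · exact Submodule.subset_span ⟨Sum.inr 1, rfl⟩
          · show fV ∈ _
            have h2 : fV = (2:ℤ) • cfun (Sum.inr 0) - cfun (Sum.inr 1) := by
              rw [hcfun0, hcfun1, ← Int.cast_smul_eq_zsmul ℝ]
              push_cast
              exact hfVw
            rw [h2]
            exact Submodule.sub_mem _
              (Submodule.smul_mem _ _ (Submodule.subset_span ⟨Sum.inr 0, rfl⟩))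
              (Submodule.subset_span ⟨Sum.inr 1, rfl⟩)
      · rw [Submodule.span_le, Set.singleton_subset_iff, ← hcfun0]
        exact Submodule.subset_span ⟨Sum.inr 0, rfl⟩
    · rw [Submodule.span_le]
      rintro _ ⟨s, rfl⟩
      rcases s with i | a
      · exact Submodule.mem_sup_left (hbbL (Sum.inl i))
      · fin_cases a
        · show w ∈ M
          exact Submodule.mem_sup_right (Submodule.subset_span rfl)
        · show eV ∈ M
          exact Submodule.mem_sup_left (hbbL (Sum.inr 0))
  have hcgram : ∀ s t, φ (cfun s) (cfun t)
      = ((Matrix.fromBlocks GB (0 : Matrix (Fin n) (Fin 2) ℤ)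
          (0 : Matrix (Fin 2) (Fin n) ℤ) !![1,1;1,0] s t : ℤ) : ℝ) := by
    rintro (i | a) (j | b)
    · simpa [hcfundef] using hpll i j
    · fin_cases b
      · simpa [hcfundef] using hlw i
      · simpa [hcfundef] using hle i
    · fin_cases a
      · simpa [hcfundef] using hwl j
      · simpa [hcfundef] using hel j
    · fin_cases a <;> fin_cases b <;>
        simp [hcfun0, hcfun1, hww, hwe, hew, hee]
  have hgramre : ∀ i j : Fin (n + 2),
      φ ((cb.reindex finSumFinEquiv) i) ((cb.reindex finSumFinEquiv) j)
      = (((gramSum GB !![1,1;1,0]) i j : ℤ) : ℝ) := by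
    intro i j
    rw [Module.Basis.reindex_apply, Module.Basis.reindex_apply, hcb]
    have hentry : (gramSum GB !![1,1;1,0]) i j
        = Matrix.fromBlocks GB 0 0 !![1,1;1,0] (finSumFinEquiv.symm i) (finSumFinEquiv.symm j) := by
      simp [gramSum]
    rw [hentry]
    exact hcgram _ _
  have hdet : IsUnit (gramSum GB !![1,1;1,0]).det := by
    have hd : (gramSum GB !![1,1;1,0]).det = GB.det * (-1) := by
      rw [gramSum, Matrix.det_reindex_self, Matrix.det_fromBlocks_zero₁₂,
        Matrix.det_fin_two_of]
      ring
    rw [hd]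
    exact hunim.mul (IsUnit.neg isUnit_one)
  have hwM : w ∈ M := Submodule.mem_sup_right (Submodule.subset_span rfl)
  have hModd : ¬ ∀ x ∈ M, ∃ k : ℤ, φ x x = 2 * (k : ℝ) := by
    intro hall
    obtain ⟨k, hk⟩ := hall w hwM
    rw [hww] at hk
    have h1 : (1 : ℤ) = 2 * k := by exact_mod_cast hk
    omega
  refine ⟨M, ⟨⟨⟨n + 2, gramSum GB !![1,1;1,0],
    ⟨cb.reindex finSumFinEquiv, hMspan, hgramre⟩, hdet⟩, hModd⟩, le_sup_left⟩, ?_⟩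
  -- Uniqueness
  rintro M' ⟨⟨⟨m, H, ⟨d, hdspan, hdgram⟩, -⟩, hodd⟩, hLM'⟩
  have hint : ∀ x ∈ M', ∀ y ∈ M', ∃ k : ℤ, φ x y = (k : ℝ) := by
    intro x hx y hy
    rw [hdspan, period_mem_span_real] at hx hy
    obtain ⟨v, rfl⟩ := hx
    obtain ⟨u, rfl⟩ := hy
    exact ⟨_, period_pair_gram φ _ H hdgram v u⟩
  have hdecomp : ∀ x ∈ M', ∃ (vl : Fin n → ℤ) (a c : ℤ),
      x = (∑ i, ((vl i : ℤ) : ℝ) • bb (Sum.inl i)) + (a : ℝ) • heH + (c : ℝ) • hfH := by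
    intro x hx
    have hq0 : ∀ s, ∃ k : ℤ, φ x (bb s) = (k : ℝ) := fun s => hint x hx (bb s) (hLM' (hbbL s))
    choose q hq using hq0
    have hxsum : x = ∑ s, bb.repr x s • bb s := (bb.sum_repr x).symm
    have hrel : ∀ s, φ x (bb s) = ∑ r, bb.repr x r * ((GG r s : ℤ) : ℝ) := by
      intro s
      conv_lhs => rw [hxsum]
      rw [_root_.map_sum]
      simp only [LinearMap.coe_sum, Finset.sum_apply, hsm1, hp]
    have hrelsplit : ∀ s, (q s : ℝ)
        = (∑ i, bb.repr x (Sum.inl i) * ((GG (Sum.inl i) s : ℤ) : ℝ))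
          + (bb.repr x (Sum.inr 0) * ((GG (Sum.inr 0) s : ℤ) : ℝ)
             + bb.repr x (Sum.inr 1) * ((GG (Sum.inr 1) s : ℤ) : ℝ)) := by
      intro s
      rw [← hq, hrel, Fintype.sum_sum_type, Fin.sum_univ_two]
    have ht1 : bb.repr x (Sum.inr 1) = (q (Sum.inr 0) : ℝ) / 2 := by
      have h := hrelsplit (Sum.inr 0)
      simp only [hGGdef, Matrix.fromBlocks_apply₁₂, Matrix.fromBlocks_apply₂₂,
        Matrix.zero_apply, Matrix.smul_apply, smul_eq_mul] at h
      norm_num [gramII] at h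
      linarith
    have ht0 : bb.repr x (Sum.inr 0) = (q (Sum.inr 1) : ℝ) / 2 := by
      have h := hrelsplit (Sum.inr 1)
      simp only [hGGdef, Matrix.fromBlocks_apply₁₂, Matrix.fromBlocks_apply₂₂,
        Matrix.zero_apply, Matrix.smul_apply, smul_eq_mul] at h
      norm_num [gramII] at h
      linarith
    haveI : Invertible GB := GB.invertibleOfIsUnitDet hunim
    have hGBD : GB * ⅟GB = 1 := mul_invOf_self GB
    have hql : ∀ j, (q (Sum.inl j) : ℝ) = ∑ i, bb.repr x (Sum.inl i) * ((GB i j : ℤ) : ℝ) := by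
      intro j
      have h := hrelsplit (Sum.inl j)
      simpa only [hGGdef, Matrix.fromBlocks_apply₁₁, Matrix.fromBlocks_apply₂₁,
        Matrix.zero_apply, Int.cast_zero, mul_zero, add_zero, zero_add] using h
    have htl : ∀ i, bb.repr x (Sum.inl i)
        = (((Matrix.vecMul (fun j => q (Sum.inl j)) (⅟GB)) i : ℤ) : ℝ) := by
      intro i
      have hcast : (((Matrix.vecMul (fun j => q (Sum.inl j)) (⅟GB)) i : ℤ) : ℝ)
          = ∑ j, (q (Sum.inl j) : ℝ) * (((⅟GB) j i : ℤ) : ℝ) := by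
        simp only [Matrix.vecMul, dotProduct, Int.cast_sum, Int.cast_mul]
      rw [hcast]
      symm
      calc ∑ j, (q (Sum.inl j) : ℝ) * (((⅟GB) j i : ℤ) : ℝ)
          = ∑ j, (∑ k, bb.repr x (Sum.inl k) * ((GB k j : ℤ) : ℝ)) * (((⅟GB) j i : ℤ) : ℝ) :=
            Finset.sum_congr rfl fun j _ => by rw [← hql j]
        _ = ∑ k, bb.repr x (Sum.inl k) * ∑ j, ((GB k j : ℤ) : ℝ) * (((⅟GB) j i : ℤ) : ℝ) := by
            simp only [Finset.sum_mul]
            rw [Finset.sum_comm]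
            simp only [mul_assoc, ← Finset.mul_sum]
        _ = ∑ k, bb.repr x (Sum.inl k) * (((GB * ⅟GB) k i : ℤ) : ℝ) := by
            refine Finset.sum_congr rfl fun k _ => ?_
            rw [Matrix.mul_apply]
            push_cast
            ring
        _ = bb.repr x (Sum.inl i) := by
            rw [hGBD]
            simp [Matrix.one_apply]
    refine ⟨Matrix.vecMul (fun j => q (Sum.inl j)) (⅟GB), q (Sum.inr 1), q (Sum.inr 0), ?_⟩
    conv_lhs => rw [hxsum, Fintype.sum_sum_type, Fin.sum_univ_two]
    rw [ht0, ht1, heHdef, hfHdef,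
      Finset.sum_congr rfl fun i (_ : i ∈ Finset.univ) => by rw [htl i]]
    show _ = (∑ i, (((Matrix.vecMul (fun j => q (Sum.inl j)) (⅟GB)) i : ℤ) : ℝ) • bb (Sum.inl i))
      + (q (Sum.inr 1) : ℝ) • ((2:ℝ)⁻¹ • eV) + (q (Sum.inr 0) : ℝ) • ((2:ℝ)⁻¹ • fV)
    rw [heVdef, hfVdef]
    module
  -- odd vector
  push_neg at hodd
  obtain ⟨x, hxM, hxodd⟩ := hodd
  obtain ⟨vl, a, c, hxdec⟩ := hdecomp x hxM
  have hval : φ x x = ((vl ⬝ᵥ GB.mulVec vl + a * c : ℤ) : ℝ) := by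
    rw [hxdec, hpairdec]
    push_cast
    ring
  obtain ⟨k0, hk0⟩ := heven vl
  have hacodd : ¬ Even (a * c) := by
    rintro ⟨k1, hk1⟩
    refine hxodd (k0 + k1) ?_
    rw [hval, hk0, hk1]
    push_cast
    ring
  rw [Int.even_mul, not_or] at hacodd
  obtain ⟨ha, hc⟩ := hacodd
  obtain ⟨α, hα⟩ := Int.not_even_iff_odd.mp ha
  obtain ⟨γ, hγ⟩ := Int.not_even_iff_odd.mp hc
  have hxw : x = ((∑ i, ((vl i : ℤ) : ℝ) • bb (Sum.inl i)) + (α : ℝ) • eV + (γ : ℝ) • fV) + w := by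
    rw [hxdec, hα, hγ, heHdef, hfHdef, hwdef, heHdef, hfHdef]
    push_cast
    module
  have hwM' : w ∈ M' := by
    have hl : (∑ i, ((vl i : ℤ) : ℝ) • bb (Sum.inl i)) + (α : ℝ) • eV + (γ : ℝ) • fV ∈ M' :=
      hLM' (hcombL vl α γ)
    have hsub := Submodule.sub_mem M' hxM hl
    rw [hxw, add_sub_cancel_left] at hsub
    exact hsub
  have hMM' : M ≤ M' := by
    rw [hMdef]
    refine sup_le hLM' ?_
    rw [Submodule.span_le, Set.singleton_subset_iff]
    exact hwM'
  have hM'M : M' ≤ M := by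
    intro y hy
    obtain ⟨vl', a', c', hydec⟩ := hdecomp y hy
    obtain ⟨k, hk⟩ := hint x hxM y hy
    have hkval : (k : ℝ) = ((vl ⬝ᵥ GB.mulVec vl' : ℤ) : ℝ) + ((a * c' + c * a' : ℤ) : ℝ) / 2 := by
      rw [← hk, hxdec, hydec, hpairdec]
    have hsum_even : Even (a * c' + c * a') := by
      have h2 : ((a * c' + c * a' : ℤ) : ℝ) = 2 * ((k - vl ⬝ᵥ GB.mulVec vl' : ℤ) : ℝ) := by
        push_cast
        push_cast at hkval
        linarith
      have h3 : (a * c' + c * a' : ℤ) = 2 * (k - vl ⬝ᵥ GB.mulVec vl') := by exact_mod_cast h2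
      exact ⟨k - vl ⬝ᵥ GB.mulVec vl', by omega⟩
    have hiff : Even c' ↔ Even a' := by
      have h1 : Even (a * c') ↔ Even c' := by rw [Int.even_mul]; exact or_iff_right ha
      have h2 : Even (c * a') ↔ Even a' := by rw [Int.even_mul]; exact or_iff_right hc
      rw [← h1, ← h2]
      exact (Int.even_add).mp hsum_even
    rcases Int.even_or_odd a' with hea | hoa
    · have hec' := hiff.mpr hea
      obtain ⟨a2, ha2⟩ := hea
      obtain ⟨c2, hc2⟩ := hec'
      have hyL : y = (∑ i, ((vl' i : ℤ) : ℝ) • bb (Sum.inl i)) + (a2 : ℝ) • eV + (c2 : ℝ) • fV := by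
        rw [hydec, ha2, hc2, heHdef, hfHdef]
        push_cast
        module
      rw [hyL]
      exact Submodule.mem_sup_left (hcombL vl' a2 c2)
    · have hoc : Odd c' := Int.not_even_iff_odd.mp (fun hec => (Int.not_even_iff_odd.mpr hoa) (hiff.mp hec))
      obtain ⟨a2, ha2⟩ := hoa
      obtain ⟨c2, hc2⟩ := hoc
      have hyL : y = ((∑ i, ((vl' i : ℤ) : ℝ) • bb (Sum.inl i)) + (a2 : ℝ) • eV + (c2 : ℝ) • fV)
          + w := by
        rw [hydec, ha2, hc2, heHdef, hfHdef, hwdef, heHdef, hfHdef]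
        push_cast
        module
      rw [hyL]
      exact Submodule.add_mem _ (Submodule.mem_sup_left (hcombL vl' a2 c2)) hwM
  exact le_antisymm hM'M hMM'
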